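/- Let a, b, c be reals with 0 < c < b ≤ a < 1, and define f(p) = a^p + b^p − 1 − c^p for real p. Then every critical point of f is a strict local maximum; that is, if f'(p₀) = 0 then f''(p₀) < 0. -/

import Mathlib

open Real

lemma deriv_fun_eq (a b c : ℝ) (ha : 0 < a) (hb : 0 < b) (hc : 0 < c) :
    deriv (fun p : ℝ => a ^ p + b ^ p - 1 - c ^ p)
      = fun p => a ^ p * log a + b ^ p * log b - c ^ p * log c := by
  funext p
  have h : HasDerivAt (fun p : ℝ => a ^ p + b ^ p - 1 - c ^ p)
      (a ^ p * log a + b ^ p * log b - c ^ p * log c) p := by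
    have := (((hasStrictDerivAt_const_rpow ha p).hasDerivAt.add
      (hasStrictDerivAt_const_rpow hb p).hasDerivAt).sub (hasDerivAt_const p (1:ℝ))).sub
      (hasStrictDerivAt_const_rpow hc p).hasDerivAt
    simp at this; exact this
  exact h.deriv

theorem critical_points_are_maxima (a b c : ℝ)
    (hc : 0 < c) (hcb : c < b) (hba : b ≤ a) (ha : a < 1)
    (p₀ : ℝ)
    (hcrit : deriv (fun p : ℝ => a ^ p + b ^ p - 1 - c ^ p) p₀ = 0) :
    deriv (deriv (fun p : ℝ => a ^ p + b ^ p - 1 - c ^ p)) p₀ < 0 := by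
  have hb : 0 < b := hc.trans hcb
  have ha0 : 0 < a := hb.trans_le hba
  rw [deriv_fun_eq a b c ha0 hb hc] at hcrit ⊢
  have h2 : deriv (fun p : ℝ => a ^ p * log a + b ^ p * log b - c ^ p * log c) p₀
      = a ^ p₀ * log a * log a + b ^ p₀ * log b * log b - c ^ p₀ * log c * log c := by
    have h : HasDerivAt (fun p : ℝ => a ^ p * log a + b ^ p * log b - c ^ p * log c)
        (a ^ p₀ * log a * log a + b ^ p₀ * log b * log b - c ^ p₀ * log c * log c) p₀ := by
      have := (((hasStrictDerivAt_const_rpow ha0 p₀).hasDerivAt.mul_const (log a)).add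
        ((hasStrictDerivAt_const_rpow hb p₀).hasDerivAt.mul_const (log b))).sub
        ((hasStrictDerivAt_const_rpow hc p₀).hasDerivAt.mul_const (log c))
      exact this
    exact h.deriv
  rw [h2]
  -- from hcrit: c^p₀ * log c = a^p₀ * log a + b^p₀ * log b
  simp only at hcrit
  have key : c ^ p₀ * log c = a ^ p₀ * log a + b ^ p₀ * log b := by linarith
  have hla : log a < 0 := log_neg ha0 ha
  have hlb : log b < 0 := log_neg hb (lt_of_le_of_lt hba ha)
  have hlca : log c < log a := by
    calc log c < log b := log_lt_log hc hcb
      _ ≤ log a := log_le_log_iff hb ha0 |>.mpr hba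
  have hlcb : log c < log b := log_lt_log hc hcb
  have hpa : (0:ℝ) < a ^ p₀ := rpow_pos_of_pos ha0 p₀
  have hpb : (0:ℝ) < b ^ p₀ := rpow_pos_of_pos hb p₀
  have t1 : a ^ p₀ * log a * (log a - log c) < 0 :=
    mul_neg_of_neg_of_pos (mul_neg_of_pos_of_neg hpa hla) (by linarith)
  have t2 : b ^ p₀ * log b * (log b - log c) < 0 :=
    mul_neg_of_neg_of_pos (mul_neg_of_pos_of_neg hpb hlb) (by linarith)
  nlinarith [key, t1, t2]
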